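/- arXiv:1403.7906 — 4 statements merged into one kernel-verified Lean document; each statement's English description precedes it below -/
import Mathlib

section
/- Let B and C be unital associative ℂ-algebras and E = Σᵢ bᵢ ⊗ cᵢ ∈ B ⊗ C an idempotent for which there exist an anti-homomorphism S_B : B → C with E(b⊗1) = E(1⊗S_B(b)) for all b ∈ B, and an anti-homomorphism S_C : C → B with (1⊗c)E = (S_C(c)⊗1)E for all c ∈ C. Let P = C ⊗ B with the tensor product algebra structure and define Δ_P : P → P ⊗ P by Δ_P(c⊗b) = Σᵢ (c ⊗ bᵢ) ⊗ (cᵢ ⊗ b). Then Δ_P is an algebra homomorphism and is coassociative: (Δ_P ⊗ id)∘Δ_P = (id ⊗ Δ_P)∘Δ_P. -/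
open scoped TensorProduct

variable (B C : Type*) [Ring B] [Algebra ℂ B] [Ring C] [Algebra ℂ C]

/-- The coproduct `Δ_P : C ⊗ B → (C ⊗ B) ⊗ (C ⊗ B)`, `c ⊗ b ↦ c ⊗ E ⊗ b`
(i.e. `Σᵢ (c ⊗ bᵢ) ⊗ (cᵢ ⊗ b)` when `E = Σᵢ bᵢ ⊗ cᵢ`). -/
noncomputable def DeltaP (E : B ⊗[ℂ] C) :
    (C ⊗[ℂ] B) →ₗ[ℂ] (C ⊗[ℂ] B) ⊗[ℂ] (C ⊗[ℂ] B) :=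
  (TensorProduct.assoc ℂ (C ⊗[ℂ] B) C B).toLinearMap ∘ₗ
    (TensorProduct.congr ((TensorProduct.assoc ℂ C B C).symm)
      (LinearEquiv.refl ℂ B)).toLinearMap ∘ₗ
    (TensorProduct.assoc ℂ C (B ⊗[ℂ] C) B).symm.toLinearMap ∘ₗ
    TensorProduct.map LinearMap.id (TensorProduct.mk ℂ (B ⊗[ℂ] C) B E)


set_option synthInstance.maxHeartbeats 1000000
set_option maxHeartbeats 1000000
set_option linter.unusedVariables false

lemma DeltaP_tmul (b₀ : B) (c₀ : C) (c : C) (b : B) :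
    DeltaP B C (b₀ ⊗ₜ[ℂ] c₀) (c ⊗ₜ[ℂ] b) = (c ⊗ₜ[ℂ] b₀) ⊗ₜ[ℂ] (c₀ ⊗ₜ[ℂ] b) := by
  simp [DeltaP]

lemma DeltaP_add (F G : B ⊗[ℂ] C) :
    DeltaP B C (F + G) = DeltaP B C F + DeltaP B C G := by
  unfold DeltaP
  rw [map_add (TensorProduct.mk ℂ (B ⊗[ℂ] C) B), TensorProduct.map_add_right]
  simp [LinearMap.comp_add]

lemma DeltaP_zero : DeltaP B C 0 = 0 := by
  unfold DeltaP
  rw [map_zero (TensorProduct.mk ℂ (B ⊗[ℂ] C) B), TensorProduct.map_zero_right]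
  simp

lemma DeltaP_mul_key (F G : B ⊗[ℂ] C) (x y : C ⊗[ℂ] B) :
    DeltaP B C (F * G) (x * y) = DeltaP B C F x * DeltaP B C G y := by
  induction x using TensorProduct.induction_on with
  | zero => simp
  | add x₁ x₂ h₁ h₂ => simp [add_mul, map_add, h₁, h₂]
  | tmul c b =>
    induction y using TensorProduct.induction_on with
    | zero => simp
    | add y₁ y₂ h₁ h₂ => simp [mul_add, map_add, h₁, h₂]
    | tmul c' b' =>
      induction F using TensorProduct.induction_on with
      | zero => simp [DeltaP_zero]
      | add F₁ F₂ h₁ h₂ => simp only [add_mul, DeltaP_add, LinearMap.add_apply, h₁, h₂]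
      | tmul b₀ c₀ =>
        induction G using TensorProduct.induction_on with
        | zero => simp [DeltaP_zero]
        | add G₁ G₂ h₁ h₂ => simp only [mul_add, DeltaP_add, LinearMap.add_apply, h₁, h₂]
        | tmul b₁ c₁ =>
          simp only [Algebra.TensorProduct.tmul_mul_tmul, DeltaP_tmul]

lemma DeltaP_coassoc_key (F G : B ⊗[ℂ] C) (c : C) (b : B) :
    (TensorProduct.assoc ℂ (C ⊗[ℂ] B) (C ⊗[ℂ] B) (C ⊗[ℂ] B))
        (TensorProduct.map (DeltaP B C F) LinearMap.id (DeltaP B C G (c ⊗ₜ[ℂ] b))) =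
      TensorProduct.map LinearMap.id (DeltaP B C G) (DeltaP B C F (c ⊗ₜ[ℂ] b)) := by
  induction F using TensorProduct.induction_on with
  | zero => simp [DeltaP_zero]
  | add F₁ F₂ h₁ h₂ =>
      simp only [DeltaP_add, LinearMap.add_apply, map_add, TensorProduct.map_add_left,
        TensorProduct.add_tmul, TensorProduct.tmul_add, h₁, h₂]
  | tmul b₁ c₁ =>
    induction G using TensorProduct.induction_on with
    | zero => simp [DeltaP_zero]
    | add G₁ G₂ h₁ h₂ =>
        simp only [DeltaP_add, LinearMap.add_apply, map_add, TensorProduct.map_add_right, h₁, h₂]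
    | tmul b₀ c₀ => simp [DeltaP_tmul]

/-- if `E ∈ B ⊗ C` is an idempotent admitting antipodal
anti-homomorphisms `S_B : B → C` and `S_C : C → B` with `E(b⊗1) = E(1⊗S_B(b))`
and `(1⊗c)E = (S_C(c)⊗1)E`, then `Δ_P` on `P = C ⊗ B` is an algebra
homomorphism and is coassociative. -/
theorem stmt9 (E : B ⊗[ℂ] C) (hE : E * E = E)
    (SB : B →ₗ[ℂ] C) (SB_anti : ∀ b b' : B, SB (b * b') = SB b' * SB b)
    (SC : C →ₗ[ℂ] B) (SC_anti : ∀ c c' : C, SC (c * c') = SC c' * SC c)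
    (hSB : ∀ b : B, E * (b ⊗ₜ[ℂ] (1 : C)) = E * ((1 : B) ⊗ₜ[ℂ] SB b))
    (hSC : ∀ c : C, ((1 : B) ⊗ₜ[ℂ] c) * E = (SC c ⊗ₜ[ℂ] (1 : C)) * E) :
    (∀ x y : C ⊗[ℂ] B, DeltaP B C E (x * y) = DeltaP B C E x * DeltaP B C E y) ∧
    (TensorProduct.assoc ℂ (C ⊗[ℂ] B) (C ⊗[ℂ] B) (C ⊗[ℂ] B)).toLinearMap ∘ₗ
        TensorProduct.map (DeltaP B C E) LinearMap.id ∘ₗ DeltaP B C E =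
      TensorProduct.map LinearMap.id (DeltaP B C E) ∘ₗ DeltaP B C E := by
  constructor
  · intro x y
    conv_lhs => rw [← hE]
    exact DeltaP_mul_key B C E E x y
  · apply TensorProduct.ext'
    intro c b
    simpa using DeltaP_coassoc_key B C E E c b
end

section
/- In the setting of a separability idempotent E ∈ B⊗C (B, C unital) with antipodal anti-homomorphisms S_B, S_C and distinguished functionals φ_B : B → ℂ, φ_C : C → ℂ satisfying (φ_B⊗id)(E) = 1_C and (id⊗φ_C)(E) = 1_B, the linear functional ε_P on P = C⊗B defined by ε_P(c⊗b) = φ_C(c·S_B(b)) is a right counit for Δ_P(c⊗b) = c⊗E⊗b: (id_P ⊗ ε_P)(Δ_P(c⊗b)) = c⊗b for all b ∈ B, c ∈ C. -/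
open scoped TensorProduct

variable (B C : Type*) [Ring B] [Algebra ℂ B] [Ring C] [Algebra ℂ C]

/-- for a separability idempotent `E ∈ B ⊗ C` with antipodal
anti-homomorphisms `S_B, S_C` and distinguished functional `φ_C` with
`(id ⊗ φ_C)(E) = 1_B`, the functional `ε_P(c⊗b) = φ_C(c · S_B(b))` is a right
counit for `Δ_P`: `(id ⊗ ε_P)(Δ_P(c⊗b)) = c⊗b`. -/
theorem stmt10 (E : B ⊗[ℂ] C) (hE : E * E = E)
    (SB : B →ₗ[ℂ] C) (SB_anti : ∀ b b' : B, SB (b * b') = SB b' * SB b)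
    (SC : C →ₗ[ℂ] B) (SC_anti : ∀ c c' : C, SC (c * c') = SC c' * SC c)
    (hSB : ∀ b : B, E * (b ⊗ₜ[ℂ] (1 : C)) = E * ((1 : B) ⊗ₜ[ℂ] SB b))
    (hSC : ∀ c : C, ((1 : B) ⊗ₜ[ℂ] c) * E = (SC c ⊗ₜ[ℂ] (1 : C)) * E)
    (phiC : C →ₗ[ℂ] ℂ)
    (hphiC : (TensorProduct.rid ℂ B).toLinearMap
        (TensorProduct.map LinearMap.id phiC E) = 1)
    (phiB : B →ₗ[ℂ] ℂ)
    (hphiB : (TensorProduct.lid ℂ C).toLinearMap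
        (TensorProduct.map phiB LinearMap.id E) = 1)
    (epsP : (C ⊗[ℂ] B) →ₗ[ℂ] ℂ)
    (hepsP : ∀ (c : C) (b : B), epsP (c ⊗ₜ[ℂ] b) = phiC (c * SB b)) :
    ∀ (c : C) (b : B),
      (TensorProduct.rid ℂ (C ⊗[ℂ] B)).toLinearMap
        (TensorProduct.map LinearMap.id epsP (DeltaP B C E (c ⊗ₜ[ℂ] b)))
        = c ⊗ₜ[ℂ] b := by
  intro c b
  have key : ∀ x : B ⊗[ℂ] C,
      (TensorProduct.rid ℂ (C ⊗[ℂ] B)).toLinearMap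
        (TensorProduct.map LinearMap.id epsP (DeltaP B C x (c ⊗ₜ[ℂ] b)))
      = c ⊗ₜ[ℂ] ((TensorProduct.rid ℂ B).toLinearMap
          (TensorProduct.map LinearMap.id phiC (x * ((1 : B) ⊗ₜ[ℂ] SB b)))) := by
    intro x
    induction x using TensorProduct.induction_on with
    | zero =>
        simp only [DeltaP, LinearMap.comp_apply, TensorProduct.map_tmul,
          LinearMap.id_coe, id_eq, TensorProduct.mk_apply,
          TensorProduct.zero_tmul, zero_mul, LinearMap.zero_apply,
          TensorProduct.tmul_zero, LinearEquiv.map_zero, LinearMap.map_zero]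
    | tmul b' c' =>
        simp [DeltaP, hepsP, Algebra.TensorProduct.tmul_mul_tmul,
          TensorProduct.tmul_smul, TensorProduct.smul_tmul']
    | add x y hx hy =>
        simp only [DeltaP, LinearMap.comp_apply, TensorProduct.map_tmul,
          LinearMap.id_coe, id_eq, TensorProduct.mk_apply] at hx hy ⊢
        simp only [TensorProduct.add_tmul, add_mul, map_add, hx, hy,
          TensorProduct.tmul_add]
  have key2 : ∀ x : B ⊗[ℂ] C,
      (TensorProduct.rid ℂ B).toLinearMap
        (TensorProduct.map LinearMap.id phiC (x * (b ⊗ₜ[ℂ] (1 : C))))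
      = (TensorProduct.rid ℂ B).toLinearMap
          (TensorProduct.map LinearMap.id phiC x) * b := by
    intro x
    induction x using TensorProduct.induction_on with
    | zero => simp
    | tmul b' c' =>
        simp [Algebra.TensorProduct.tmul_mul_tmul, smul_mul_assoc]
    | add x y hx hy =>
        simp only [add_mul, map_add]
        rw [hx, hy]
  rw [key, ← hSB, key2, hphiC, one_mul]
end

section
/- In the same setting, φ_B(S_C(c)·b) = φ_C(c·S_B(b)) for all b ∈ B and c ∈ C; i.e., the left counit ε'_P(c⊗b) = φ_B(S_C(c)b) equals the right counit ε_P(c⊗b) = φ_C(cS_B(b)). -/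
open scoped TensorProduct

/-- for a separability idempotent `E ∈ B ⊗ C` with antipodal
anti-homomorphisms `S_B, S_C` and distinguished functionals `φ_B, φ_C`
(`(φ_B⊗id)(E) = 1_C`, `(id⊗φ_C)(E) = 1_B`), one has
`φ_B(S_C(c)·b) = φ_C(c·S_B(b))` for all `b ∈ B`, `c ∈ C`; i.e. the left and
right counits of `(P, Δ_P)` coincide. -/
theorem stmt11 {B C : Type*} [Ring B] [Algebra ℂ B] [Ring C] [Algebra ℂ C]
    (E : B ⊗[ℂ] C) (hE : E * E = E)
    (SB : B →ₗ[ℂ] C) (SB_anti : ∀ b b' : B, SB (b * b') = SB b' * SB b)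
    (SC : C →ₗ[ℂ] B) (SC_anti : ∀ c c' : C, SC (c * c') = SC c' * SC c)
    (hSB : ∀ b : B, E * (b ⊗ₜ[ℂ] (1 : C)) = E * ((1 : B) ⊗ₜ[ℂ] SB b))
    (hSC : ∀ c : C, ((1 : B) ⊗ₜ[ℂ] c) * E = (SC c ⊗ₜ[ℂ] (1 : C)) * E)
    (phiB : B →ₗ[ℂ] ℂ)
    (hphiB : (TensorProduct.lid ℂ C).toLinearMap
        (TensorProduct.map phiB LinearMap.id E) = 1)
    (phiC : C →ₗ[ℂ] ℂ)
    (hphiC : (TensorProduct.rid ℂ B).toLinearMap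
        (TensorProduct.map LinearMap.id phiC E) = 1) :
    ∀ (b : B) (c : C), phiB (SC c * b) = phiC (c * SB b) := by
  intro b c
  set Φ : B ⊗[ℂ] C →ₗ[ℂ] ℂ :=
    (LinearMap.mul' ℂ ℂ) ∘ₗ TensorProduct.map phiB phiC with hΦ
  set F : B ⊗[ℂ] C →ₗ[ℂ] B :=
    (TensorProduct.rid ℂ B).toLinearMap ∘ₗ TensorProduct.map LinearMap.id phiC with hF
  set G : B ⊗[ℂ] C →ₗ[ℂ] C :=
    (TensorProduct.lid ℂ C).toLinearMap ∘ₗ TensorProduct.map phiB LinearMap.id with hG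
  have key : (SC c ⊗ₜ[ℂ] (1 : C)) * E * (b ⊗ₜ[ℂ] (1 : C))
      = ((1 : B) ⊗ₜ[ℂ] c) * E * ((1 : B) ⊗ₜ[ℂ] SB b) := by
    rw [← hSC, mul_assoc, hSB, mul_assoc]
  have hA : ∀ (a : B) (x : B ⊗[ℂ] C),
      Φ ((a ⊗ₜ[ℂ] (1 : C)) * x * (b ⊗ₜ[ℂ] (1 : C))) = phiB (a * F x * b) := by
    intro a x
    induction x using TensorProduct.induction_on with
    | zero => simp
    | tmul p q =>
        simp [hΦ, hF, Algebra.TensorProduct.tmul_mul_tmul, mul_smul_comm,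
          smul_mul_assoc, mul_comm]
    | add x y hx hy =>
        simp only [mul_add, add_mul, map_add, hx, hy, mul_add]
  have hB : ∀ (c' : C) (x : B ⊗[ℂ] C),
      Φ (((1 : B) ⊗ₜ[ℂ] c) * x * ((1 : B) ⊗ₜ[ℂ] c')) = phiC (c * G x * c') := by
    intro c' x
    induction x using TensorProduct.induction_on with
    | zero => simp
    | tmul p q =>
        simp [hΦ, hG, Algebra.TensorProduct.tmul_mul_tmul, mul_smul_comm,
          smul_mul_assoc, mul_comm]
    | add x y hx hy =>
        simp only [mul_add, add_mul, map_add, hx, hy, mul_add]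
  have h1 := hA (SC c) E
  have h2 := hB (SB b) E
  rw [key] at h1
  rw [h2] at h1
  have hFE : F E = 1 := hphiC
  have hGE : G E = 1 := hphiB
  rw [hFE] at h1
  rw [hGE] at h1
  simpa using h1.symm
end

section
/- Let Q be a Hopf algebra, B a right Q-module algebra, C a left Q-module algebra (both unital), and E = Σᵢ bᵢ⊗cᵢ ∈ B⊗C an element satisfying the compatibility Σᵢ (bᵢ◁q)⊗cᵢ = Σᵢ bᵢ⊗(q▷cᵢ) for all q ∈ Q. Then in the two-sided smash product algebra P (with B, C, Q viewed as subalgebras via b ↦ 1⊗1⊗b etc. and commutation rules bq = Σ q₍₁₎(b◁q₍₂₎), qc = Σ (q₍₁₎▷c)q₍₂₎), the element E (sitting in P⊗P as Σᵢ (1⊗1⊗bᵢ)⊗(cᵢ⊗1⊗1)) commutes with Δ(q) := Σ (1⊗q₍₁₎⊗1)⊗(1⊗q₍₂₎⊗1) for all q ∈ Q. -/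
open scoped TensorProduct

section Aux

variable {Q B C : Type} [Ring Q] [Algebra ℂ Q] [Ring B] [Algebra ℂ B] [Ring C] [Algebra ℂ C]

/-- `q1 ⊗ q2 ↦ 1 ⊗ q1 ⊗ (b ◁ q2)`. -/
noncomputable def stmt14.kmap (ract : Q →ₗ[ℂ] B →ₗ[ℂ] B) (b : B) :
    Q ⊗[ℂ] Q →ₗ[ℂ] C ⊗[ℂ] (Q ⊗[ℂ] B) :=
  (TensorProduct.mk ℂ C (Q ⊗[ℂ] B) 1) ∘ₗ TensorProduct.map LinearMap.id (ract.flip b)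

@[simp] lemma stmt14.kmap_tmul (ract : Q →ₗ[ℂ] B →ₗ[ℂ] B) (b : B) (q1 q2 : Q) :
    stmt14.kmap (C := C) ract b (q1 ⊗ₜ[ℂ] q2) = (1 : C) ⊗ₜ[ℂ] (q1 ⊗ₜ[ℂ] ract q2 b) := rfl

/-- `q ↦ c ⊗ q ⊗ 1`. -/
noncomputable def stmt14.mmap (c : C) : Q →ₗ[ℂ] C ⊗[ℂ] (Q ⊗[ℂ] B) :=
  (TensorProduct.mk ℂ C (Q ⊗[ℂ] B) c) ∘ₗ ((TensorProduct.mk ℂ Q B).flip 1)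

@[simp] lemma stmt14.mmap_apply (c : C) (q : Q) :
    stmt14.mmap (B := B) c q = c ⊗ₜ[ℂ] (q ⊗ₜ[ℂ] (1 : B)) := rfl

/-- `q ↦ 1 ⊗ q ⊗ b`. -/
noncomputable def stmt14.amap (b : B) : Q →ₗ[ℂ] C ⊗[ℂ] (Q ⊗[ℂ] B) :=
  (TensorProduct.mk ℂ C (Q ⊗[ℂ] B) 1) ∘ₗ ((TensorProduct.mk ℂ Q B).flip b)

@[simp] lemma stmt14.amap_apply (b : B) (q : Q) :
    stmt14.amap (C := C) b q = (1 : C) ⊗ₜ[ℂ] (q ⊗ₜ[ℂ] b) := rfl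

/-- `q1 ⊗ q2 ↦ (q1 ▷ c) ⊗ q2 ⊗ 1`. -/
noncomputable def stmt14.bmap (act : Q →ₗ[ℂ] C →ₗ[ℂ] C) (c : C) :
    Q ⊗[ℂ] Q →ₗ[ℂ] C ⊗[ℂ] (Q ⊗[ℂ] B) :=
  TensorProduct.map (act.flip c) ((TensorProduct.mk ℂ Q B).flip 1)

@[simp] lemma stmt14.bmap_tmul (act : Q →ₗ[ℂ] C →ₗ[ℂ] C) (c : C) (q1 q2 : Q) :
    stmt14.bmap (B := B) act c (q1 ⊗ₜ[ℂ] q2) = act q1 c ⊗ₜ[ℂ] (q2 ⊗ₜ[ℂ] (1 : B)) := rfl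

end Aux

/-- with `Q` a Hopf algebra, `B` a unital right `Q`-module
algebra, `C` a unital left `Q`-module algebra, `P = C ⊗ Q ⊗ B` the two-sided
smash product, and `E = Σᵢ bᵢ ⊗ cᵢ ∈ B ⊗ C` satisfying the compatibility
`Σᵢ (bᵢ◁q) ⊗ cᵢ = Σᵢ bᵢ ⊗ (q▷cᵢ)`, the element `E` (sitting in `P ⊗ P` as
`Σᵢ (1⊗1⊗bᵢ) ⊗ (cᵢ⊗1⊗1)`) commutes with `Δ(q) = Σ (1⊗q₍₁₎⊗1) ⊗ (1⊗q₍₂₎⊗1)`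
for every `q ∈ Q`. -/
theorem stmt14 {Q B C : Type} [Ring Q] [HopfAlgebra ℂ Q]
    [Ring B] [Algebra ℂ B] [Ring C] [Algebra ℂ C]
    (act : Q →ₗ[ℂ] C →ₗ[ℂ] C) (ract : Q →ₗ[ℂ] B →ₗ[ℂ] B)
    (hact_mul : ∀ (q q' : Q) (c : C), act (q * q') c = act q (act q' c))
    (hact_one : ∀ c : C, act 1 c = c)
    (hact_alg : ∀ (q : Q) {ι : Type} (s : Finset ι) (x y : ι → Q),
      Coalgebra.comul (R := ℂ) q = ∑ i ∈ s, x i ⊗ₜ[ℂ] y i →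
      ∀ c c' : C, act q (c * c') = ∑ i ∈ s, act (x i) c * act (y i) c')
    (hact_unit : ∀ q : Q, act q 1 = Coalgebra.counit (R := ℂ) q • (1 : C))
    (hract_mul : ∀ (q q' : Q) (b : B), ract (q * q') b = ract q' (ract q b))
    (hract_one : ∀ b : B, ract 1 b = b)
    (hract_alg : ∀ (q : Q) {ι : Type} (s : Finset ι) (x y : ι → Q),
      Coalgebra.comul (R := ℂ) q = ∑ i ∈ s, x i ⊗ₜ[ℂ] y i →
      ∀ b b' : B, ract q (b * b') = ∑ i ∈ s, ract (x i) b * ract (y i) b')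
    (hract_unit : ∀ q : Q, ract q 1 = Coalgebra.counit (R := ℂ) q • (1 : B))
    (mulP : (C ⊗[ℂ] (Q ⊗[ℂ] B)) →ₗ[ℂ] (C ⊗[ℂ] (Q ⊗[ℂ] B)) →ₗ[ℂ] (C ⊗[ℂ] (Q ⊗[ℂ] B)))
    (hmul : ∀ (q q' : Q) {ι κ : Type} (s : Finset ι) (t : Finset κ)
      (x y : ι → Q) (u v : κ → Q),
      Coalgebra.comul (R := ℂ) q = ∑ i ∈ s, x i ⊗ₜ[ℂ] y i →
      Coalgebra.comul (R := ℂ) q' = ∑ j ∈ t, u j ⊗ₜ[ℂ] v j →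
      ∀ (c c' : C) (b b' : B),
        mulP (c ⊗ₜ[ℂ] (q ⊗ₜ[ℂ] b)) (c' ⊗ₜ[ℂ] (q' ⊗ₜ[ℂ] b')) =
          ∑ i ∈ s, ∑ j ∈ t,
            (c * act (x i) c') ⊗ₜ[ℂ] ((y i * u j) ⊗ₜ[ℂ] (ract (v j) b * b')))
    (E : B ⊗[ℂ] C)
    (hcompat : ∀ q : Q,
      TensorProduct.map (ract q) LinearMap.id E =
        TensorProduct.map LinearMap.id (act q) E) :
    ∀ (q : Q) {ι κ : Type} (s : Finset ι) (x y : ι → Q)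
      (t : Finset κ) (bb : κ → B) (cc : κ → C),
      Coalgebra.comul (R := ℂ) q = ∑ i ∈ s, x i ⊗ₜ[ℂ] y i →
      E = ∑ j ∈ t, bb j ⊗ₜ[ℂ] cc j →
      (∑ j ∈ t, ∑ i ∈ s,
          mulP ((1 : C) ⊗ₜ[ℂ] ((1 : Q) ⊗ₜ[ℂ] bb j)) ((1 : C) ⊗ₜ[ℂ] (x i ⊗ₜ[ℂ] (1 : B)))
            ⊗ₜ[ℂ]
          mulP (cc j ⊗ₜ[ℂ] ((1 : Q) ⊗ₜ[ℂ] (1 : B))) ((1 : C) ⊗ₜ[ℂ] (y i ⊗ₜ[ℂ] (1 : B))))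
        =
      (∑ j ∈ t, ∑ i ∈ s,
          mulP ((1 : C) ⊗ₜ[ℂ] (x i ⊗ₜ[ℂ] (1 : B))) ((1 : C) ⊗ₜ[ℂ] ((1 : Q) ⊗ₜ[ℂ] bb j))
            ⊗ₜ[ℂ]
          mulP ((1 : C) ⊗ₜ[ℂ] (y i ⊗ₜ[ℂ] (1 : B))) (cc j ⊗ₜ[ℂ] ((1 : Q) ⊗ₜ[ℂ] (1 : B)))) := by
  intro q ι κ s x y t bb cc hq hE
  -- comul 1 = 1 ⊗ₜ 1, as a one-element sum
  have comul1 : Coalgebra.comul (R := ℂ) (1 : Q) =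
      ∑ _i ∈ ({0} : Finset ℕ), (1 : Q) ⊗ₜ[ℂ] (1 : Q) := by
    simp [Algebra.TensorProduct.one_def]
  -- counit laws for explicit representations
  have hcounitR : ∀ {σ : Type} (S : Finset σ) (u v : σ → Q) (q' : Q),
      Coalgebra.comul (R := ℂ) q' = ∑ i ∈ S, u i ⊗ₜ[ℂ] v i →
      ∑ i ∈ S, Coalgebra.counit (R := ℂ) (u i) • v i = q' := by
    intro σ S u v q' h
    have h1 := Coalgebra.rTensor_counit_comul (R := ℂ) q'
    rw [h, map_sum] at h1
    have h2 := congrArg (TensorProduct.lid ℂ Q) h1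
    simpa [map_sum] using h2
  have hcounitL : ∀ {σ : Type} (S : Finset σ) (u v : σ → Q) (q' : Q),
      Coalgebra.comul (R := ℂ) q' = ∑ i ∈ S, u i ⊗ₜ[ℂ] v i →
      ∑ i ∈ S, Coalgebra.counit (R := ℂ) (v i) • u i = q' := by
    intro σ S u v q' h
    have h1 := Coalgebra.lTensor_counit_comul (R := ℂ) q'
    rw [h, map_sum] at h1
    have h2 := congrArg (TensorProduct.rid ℂ Q) h1
    simpa [map_sum] using h2
  -- the four product computations
  have prod1 : ∀ (j : κ) (q' : Q),
      mulP ((1 : C) ⊗ₜ[ℂ] ((1 : Q) ⊗ₜ[ℂ] bb j)) ((1 : C) ⊗ₜ[ℂ] (q' ⊗ₜ[ℂ] (1 : B))) =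
        stmt14.kmap ract (bb j) (Coalgebra.comul (R := ℂ) q') := by
    intro j q'
    obtain ⟨S, hS⟩ := TensorProduct.exists_finset (Coalgebra.comul (R := ℂ) q')
    rw [hmul 1 q' ({0} : Finset ℕ) S (fun _ => 1) (fun _ => 1) (fun p => p.1)
      (fun p => p.2) comul1 hS, hS, map_sum]
    simp [hact_one]
  have prod2 : ∀ (j : κ) (q' : Q),
      mulP (cc j ⊗ₜ[ℂ] ((1 : Q) ⊗ₜ[ℂ] (1 : B))) ((1 : C) ⊗ₜ[ℂ] (q' ⊗ₜ[ℂ] (1 : B))) =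
        stmt14.mmap (cc j) q' := by
    intro j q'
    obtain ⟨S, hS⟩ := TensorProduct.exists_finset (Coalgebra.comul (R := ℂ) q')
    rw [hmul 1 q' ({0} : Finset ℕ) S (fun _ => 1) (fun _ => 1) (fun p => p.1)
      (fun p => p.2) comul1 hS]
    have key := hcounitL S (fun p => p.1) (fun p => p.2) q' hS
    calc ∑ _i ∈ ({0} : Finset ℕ), ∑ p ∈ S,
          (cc j * act 1 1) ⊗ₜ[ℂ] ((1 * p.1) ⊗ₜ[ℂ] (ract p.2 (1 : B) * 1))
        = ∑ p ∈ S, cc j ⊗ₜ[ℂ]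
            ((Coalgebra.counit (R := ℂ) p.2 • p.1) ⊗ₜ[ℂ] (1 : B)) := by
          simp [hact_one, hract_unit, TensorProduct.smul_tmul, TensorProduct.tmul_smul]
      _ = cc j ⊗ₜ[ℂ] ((∑ p ∈ S, Coalgebra.counit (R := ℂ) p.2 • p.1) ⊗ₜ[ℂ] (1 : B)) := by
          rw [← TensorProduct.tmul_sum]
          congr 1
          rw [TensorProduct.sum_tmul]
      _ = stmt14.mmap (cc j) q' := by rw [key]; rfl
  have prod3 : ∀ (j : κ) (q' : Q),
      mulP ((1 : C) ⊗ₜ[ℂ] (q' ⊗ₜ[ℂ] (1 : B))) ((1 : C) ⊗ₜ[ℂ] ((1 : Q) ⊗ₜ[ℂ] bb j)) =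
        stmt14.amap (bb j) q' := by
    intro j q'
    obtain ⟨S, hS⟩ := TensorProduct.exists_finset (Coalgebra.comul (R := ℂ) q')
    rw [hmul q' 1 S ({0} : Finset ℕ) (fun p => p.1) (fun p => p.2) (fun _ => 1)
      (fun _ => 1) hS comul1]
    have key := hcounitR S (fun p => p.1) (fun p => p.2) q' hS
    calc ∑ p ∈ S, ∑ _i ∈ ({0} : Finset ℕ),
          ((1 : C) * act p.1 1) ⊗ₜ[ℂ] ((p.2 * 1) ⊗ₜ[ℂ] (ract 1 (1 : B) * bb j))
        = ∑ p ∈ S, (1 : C) ⊗ₜ[ℂ]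
            ((Coalgebra.counit (R := ℂ) p.1 • p.2) ⊗ₜ[ℂ] bb j) := by
          simp [hact_unit, hract_one, TensorProduct.smul_tmul, TensorProduct.tmul_smul]
      _ = (1 : C) ⊗ₜ[ℂ] ((∑ p ∈ S, Coalgebra.counit (R := ℂ) p.1 • p.2) ⊗ₜ[ℂ] bb j) := by
          rw [← TensorProduct.tmul_sum]
          congr 1
          rw [TensorProduct.sum_tmul]
      _ = stmt14.amap (bb j) q' := by rw [key]; rfl
  have prod4 : ∀ (j : κ) (q' : Q),
      mulP ((1 : C) ⊗ₜ[ℂ] (q' ⊗ₜ[ℂ] (1 : B))) (cc j ⊗ₜ[ℂ] ((1 : Q) ⊗ₜ[ℂ] (1 : B))) =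
        stmt14.bmap act (cc j) (Coalgebra.comul (R := ℂ) q') := by
    intro j q'
    obtain ⟨S, hS⟩ := TensorProduct.exists_finset (Coalgebra.comul (R := ℂ) q')
    rw [hmul q' 1 S ({0} : Finset ℕ) (fun p => p.1) (fun p => p.2) (fun _ => 1)
      (fun _ => 1) hS comul1, hS, map_sum]
    simp [hract_one]
  -- the two global linear maps
  set F : (Q ⊗[ℂ] Q) ⊗[ℂ] Q →ₗ[ℂ] (C ⊗[ℂ] (Q ⊗[ℂ] B)) ⊗[ℂ] (C ⊗[ℂ] (Q ⊗[ℂ] B)) :=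
    ∑ j ∈ t, TensorProduct.map (stmt14.kmap ract (bb j)) (stmt14.mmap (cc j)) with hF
  set G : Q ⊗[ℂ] (Q ⊗[ℂ] Q) →ₗ[ℂ] (C ⊗[ℂ] (Q ⊗[ℂ] B)) ⊗[ℂ] (C ⊗[ℂ] (Q ⊗[ℂ] B)) :=
    ∑ j ∈ t, TensorProduct.map (stmt14.amap (bb j)) (stmt14.bmap act (cc j)) with hG
  -- compatibility in summed form
  have hcompat' : ∀ q2 : Q,
      ∑ j ∈ t, ract q2 (bb j) ⊗ₜ[ℂ] cc j = ∑ j ∈ t, bb j ⊗ₜ[ℂ] act q2 (cc j) := by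
    intro q2
    have h := hcompat q2
    rw [hE, map_sum, map_sum] at h
    simpa using h
  -- F = G ∘ assoc
  have hFG : F = G ∘ₗ (TensorProduct.assoc ℂ Q Q Q).toLinearMap := by
    apply TensorProduct.ext_threefold
    intro q1 q2 q3
    have key := congrArg (TensorProduct.map
        ((TensorProduct.mk ℂ C (Q ⊗[ℂ] B) 1) ∘ₗ (TensorProduct.mk ℂ Q B q1))
        ((TensorProduct.mk ℂ C (Q ⊗[ℂ] B)).flip (q3 ⊗ₜ[ℂ] (1 : B))))
      (hcompat' q2)
    rw [map_sum, map_sum] at key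
    simp only [hF, hG, LinearMap.comp_apply, LinearEquiv.coe_coe,
      TensorProduct.assoc_tmul, LinearMap.sum_apply, TensorProduct.map_tmul]
    simpa using key
  calc (∑ j ∈ t, ∑ i ∈ s,
        mulP ((1 : C) ⊗ₜ[ℂ] ((1 : Q) ⊗ₜ[ℂ] bb j)) ((1 : C) ⊗ₜ[ℂ] (x i ⊗ₜ[ℂ] (1 : B)))
          ⊗ₜ[ℂ]
        mulP (cc j ⊗ₜ[ℂ] ((1 : Q) ⊗ₜ[ℂ] (1 : B))) ((1 : C) ⊗ₜ[ℂ] (y i ⊗ₜ[ℂ] (1 : B))))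
      = F (LinearMap.rTensor Q (Coalgebra.comul (R := ℂ))
          (Coalgebra.comul (R := ℂ) q)) := by
        rw [hq, map_sum]
        simp only [LinearMap.rTensor_tmul, hF, LinearMap.sum_apply, map_sum,
          TensorProduct.map_tmul]
        rw [Finset.sum_comm]
        refine Finset.sum_congr rfl fun i _ => Finset.sum_congr rfl fun j _ => ?_
        rw [prod1 j (x i), prod2 j (y i)]
    _ = G ((TensorProduct.assoc ℂ Q Q Q)
          (LinearMap.rTensor Q (Coalgebra.comul (R := ℂ))
            (Coalgebra.comul (R := ℂ) q))) := by
        rw [hFG]; rfl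
    _ = G (LinearMap.lTensor Q (Coalgebra.comul (R := ℂ))
          (Coalgebra.comul (R := ℂ) q)) := by
        rw [Coalgebra.coassoc_apply]
    _ = (∑ j ∈ t, ∑ i ∈ s,
        mulP ((1 : C) ⊗ₜ[ℂ] (x i ⊗ₜ[ℂ] (1 : B))) ((1 : C) ⊗ₜ[ℂ] ((1 : Q) ⊗ₜ[ℂ] bb j))
          ⊗ₜ[ℂ]
        mulP ((1 : C) ⊗ₜ[ℂ] (y i ⊗ₜ[ℂ] (1 : B))) (cc j ⊗ₜ[ℂ] ((1 : Q) ⊗ₜ[ℂ] (1 : B)))) := by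
        rw [hq, map_sum]
        simp only [LinearMap.lTensor_tmul, hG, LinearMap.sum_apply, map_sum,
          TensorProduct.map_tmul]
        rw [Finset.sum_comm]
        refine Finset.sum_congr rfl fun j _ => Finset.sum_congr rfl fun i _ => ?_
        rw [prod3 j (x i), prod4 j (y i)]
end
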